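/- Let S be a finite poset and V an abelian category with enough injectives. Then the abelian category of diagrams S ⥤ V has enough injectives. More precisely, every diagram D : S ⥤ V admits a monomorphism into a finite direct sum ⊕_{s ∈ S} ⟨s⟩J_s, where for each s the object J_s is an injective object of V admitting a monomorphism D(s) → J_s; in particular this direct sum is an injective object of the functor category. -/

import Mathlib

open CategoryTheory CategoryTheory.Limits ZeroObject
open scoped Classical

attribute [local instance] CategoryTheory.Limits.HasFiniteBiproducts.of_hasFiniteProducts

universe u v

variable {S : Type} [PartialOrder S] {V : Type u} [Category.{v} V] [Abelian V]

/-- The cone-shaped sheaf `⟨s⟩W` on a poset `S`: its value at `t` is `W` if `t ≤ s` and `0`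
otherwise; the structure map for `t ≤ t' ≤ s` is the identity of `W`, and all other structure
maps are zero. -/
noncomputable def coneSheaf (s : S) (W : V) : S ⥤ V where
  obj t := if t ≤ s then W else 0
  map {t t'} f :=
    if h' : t' ≤ s then
      eqToHom (by rw [if_pos (le_trans (leOfHom f) h'), if_pos h'])
    else 0
  map_id t := by
    by_cases h : t ≤ s
    · rw [dif_pos h]
      simp
    · exact ((isZero_zero V).of_iso (eqToIso (if_neg h))).eq_of_src _ _
  map_comp {t t' t''} f g := by
    by_cases h'' : t'' ≤ s
    · have h' : t' ≤ s := le_trans (leOfHom g) h''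
      rw [dif_pos h'', dif_pos h'', dif_pos h', eqToHom_trans]
    · exact ((isZero_zero V).of_iso (eqToIso (if_neg h''))).eq_of_tgt _ _

lemma coneSheaf_obj_isZero (s : S) (W : V) {t : S} (h : ¬ t ≤ s) :
    IsZero ((coneSheaf s W).obj t) :=
  (isZero_zero V).of_iso (eqToIso (if_neg h))

/-- homs into the cone sheaf from the component at `s` -/
noncomputable def coneSheafHom {s : S} {W : V} (D : S ⥤ V) (f : D.obj s ⟶ W) :
    D ⟶ coneSheaf s W where
  app t := if h : t ≤ s then
      D.map (homOfLE h) ≫ f ≫ eqToHom (if_pos h).symm else 0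
  naturality {t t'} φ := by
    by_cases h' : t' ≤ s
    · have h : t ≤ s := le_trans (leOfHom φ) h'
      rw [dif_pos h, dif_pos h']
      show _ = _ ≫ (coneSheaf s W).map φ
      dsimp only [coneSheaf]
      rw [dif_pos h']
      rw [Category.assoc, Category.assoc, eqToHom_trans, ← D.map_comp_assoc]
      rfl
    · apply (coneSheaf_obj_isZero s W h').eq_of_tgt

lemma coneSheaf_map_eq {s : S} (W : V) {t t' : S} (φ : t ⟶ t') (h' : t' ≤ s) :
    (coneSheaf s W).map φ =
      eqToHom (by dsimp only [coneSheaf]; rw [if_pos (le_trans (leOfHom φ) h'), if_pos h']) := by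
  dsimp only [coneSheaf]
  rw [dif_pos h']

lemma coneSheaf_hom_app_eq {s : S} {W : V} {D : S ⥤ V} (φ : D ⟶ coneSheaf s W)
    {t : S} (h : t ≤ s) :
    φ.app t = D.map (homOfLE h) ≫ φ.app s ≫
      eqToHom (show (if s ≤ s then W else (0:V)) = _ by
        dsimp only [coneSheaf]; rw [if_pos le_rfl, if_pos h]) := by
  have := φ.naturality (homOfLE h)
  rw [coneSheaf_map_eq W (homOfLE h) le_rfl] at this
  rw [reassoc_of% this]
  erw [eqToHom_trans, eqToHom_refl, Category.comp_id]

instance coneSheaf_injective (s : S) (J : V) [Injective J] :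
    Injective (coneSheaf s J) where
  factors {X Y} φ i hi := by
    have : Mono (i.app s) := inferInstance
    obtain ⟨h, hh⟩ := Injective.factors (φ.app s ≫ eqToHom (if_pos le_rfl)) (i.app s)
    refine ⟨coneSheafHom Y h, ?_⟩
    ext t
    by_cases ht : t ≤ s
    · show i.app t ≫ (coneSheafHom Y h).app t = φ.app t
      dsimp only [coneSheafHom]
      rw [dif_pos ht, ← i.naturality_assoc (homOfLE ht), reassoc_of% hh,
        coneSheaf_hom_app_eq φ ht]
      simp
      erw [eqToHom_trans]
    · apply (coneSheaf_obj_isZero s J ht).eq_of_tgt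

/-- If `S` is a finite poset and `V` an abelian category with enough injectives,
then the category of diagrams `S ⥤ V` has enough injectives; more precisely, every diagram
`D` admits a monomorphism into a finite direct sum `⊕_{s ∈ S} ⟨s⟩J_s` where each `J_s` is an
injective object of `V` admitting a monomorphism `D(s) → J_s`, and this direct sum is an
injective object of the functor category. -/
theorem functorCategory_enoughInjectives [Fintype S] [EnoughInjectives V] :
    EnoughInjectives (S ⥤ V) ∧
      ∀ D : S ⥤ V,
        ∃ (J : S → V) (f : ∀ s : S, D.obj s ⟶ J s)
          (g : D ⟶ ⨁ fun s : S => coneSheaf s (J s)),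
          (∀ s : S, Injective (J s)) ∧ (∀ s : S, Mono (f s)) ∧ Mono g ∧
            Injective (⨁ fun s : S => coneSheaf s (J s)) := by
  have key : ∀ D : S ⥤ V,
      ∃ (J : S → V) (f : ∀ s : S, D.obj s ⟶ J s)
        (g : D ⟶ ⨁ fun s : S => coneSheaf s (J s)),
        (∀ s : S, Injective (J s)) ∧ (∀ s : S, Mono (f s)) ∧ Mono g ∧
          Injective (⨁ fun s : S => coneSheaf s (J s)) := by
    intro D
    refine ⟨fun s => Injective.under (D.obj s), fun s => Injective.ι (D.obj s),
      biproduct.lift (fun s => coneSheafHom D (Injective.ι (D.obj s))),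
      fun s => inferInstance, fun s => inferInstance, ?_, inferInstance⟩
    rw [NatTrans.mono_iff_mono_app]
    intro t
    have hcomp : (biproduct.lift (fun s => coneSheafHom D (Injective.ι (D.obj s)))).app t ≫
        (biproduct.π (fun s : S => coneSheaf s (Injective.under (D.obj s))) t).app t =
        (coneSheafHom D (Injective.ι (D.obj t))).app t := by
      rw [← NatTrans.comp_app, biproduct.lift_π]
    have : Mono ((coneSheafHom D (Injective.ι (D.obj t))).app t) := by
      dsimp only [coneSheafHom]
      rw [dif_pos le_rfl]
      have : homOfLE (le_refl t) = 𝟙 t := rfl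
      rw [this, D.map_id, Category.id_comp]
      exact @mono_comp _ _ _ _ _ _ _ _ (IsIso.mono_of_iso (eqToIso (if_pos (le_refl t)).symm).hom)
    have hm : Mono ((biproduct.lift (fun s => coneSheafHom D (Injective.ι (D.obj s)))).app t ≫
        (biproduct.π (fun s : S => coneSheaf s (Injective.under (D.obj s))) t).app t) :=
      hcomp ▸ this
    exact mono_of_mono _ ((biproduct.π (fun s : S => coneSheaf s (Injective.under (D.obj s))) t).app t)
  refine ⟨⟨fun D => ?_⟩, key⟩
  obtain ⟨J, f, g, hJ, hf, hg, hInj⟩ := key D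
  exact ⟨⟨_, hInj, g, hg⟩⟩
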